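/- For every n ≥ 1 and b < 2^n: if T^[n](b) is even then m(b, n+1) = m(b,n) and m(b + 2^n, n+1) = m(b,n) + 1; if T^[n](b) is odd then m(b, n+1) = m(b,n) + 1 and m(b + 2^n, n+1) = m(b,n). -/
import Mathlib


def T (N : ℕ) : ℕ := if N % 2 = 0 then N / 2 else (3 * N + 1) / 2

def m (b n : ℕ) : ℕ := ((Finset.range n).filter (fun k => Odd (T^[k] b))).card

lemma m_succ (b k : ℕ) : m b (k + 1) = m b k + if Odd (T^[k] b) then 1 else 0 := by
  unfold m
  rw [Finset.range_add_one, Finset.filter_insert]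
  split
  · rw [Finset.card_insert_of_notMem (by simp)]
  · simp

lemma T_even (x j t : ℕ) (ht : 1 ≤ t) (hx : Even x) :
    T (x + 3 ^ j * 2 ^ t) = T x + 3 ^ j * 2 ^ (t - 1) := by
  obtain ⟨s, rfl⟩ : ∃ s, t = s + 1 := ⟨t - 1, by omega⟩
  obtain ⟨a, rfl⟩ := hx
  have h : 3 ^ j * 2 ^ (s + 1) = 2 * (3 ^ j * 2 ^ s) := by ring
  rw [h]
  set e := 3 ^ j * 2 ^ s with he
  have h1 : (a + a + 2 * e) % 2 = 0 := by omega
  have h2 : (a + a) % 2 = 0 := by omega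
  simp only [T, h1, h2, if_true, Nat.add_sub_cancel]
  omega

lemma T_odd (x j t : ℕ) (ht : 1 ≤ t) (hx : Odd x) :
    T (x + 3 ^ j * 2 ^ t) = T x + 3 ^ (j + 1) * 2 ^ (t - 1) := by
  obtain ⟨s, rfl⟩ : ∃ s, t = s + 1 := ⟨t - 1, by omega⟩
  obtain ⟨a, rfl⟩ := hx
  have h : 3 ^ j * 2 ^ (s + 1) = 2 * (3 ^ j * 2 ^ s) := by ring
  have h' : 3 ^ (j + 1) * 2 ^ (s + 1 - 1) = 3 * (3 ^ j * 2 ^ s) := by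
    simp [pow_succ]; ring
  rw [h, h']
  set e := 3 ^ j * 2 ^ s with he
  have h1 : (2 * a + 1 + 2 * e) % 2 = 1 := by omega
  have h2 : (2 * a + 1) % 2 = 1 := by omega
  simp only [T, h1, h2]
  norm_num
  omega

lemma key (n b : ℕ) : ∀ k ≤ n, T^[k] (b + 2 ^ n) = T^[k] b + 3 ^ (m b k) * 2 ^ (n - k) := by
  intro k hk
  induction k with
  | zero => simp [m]
  | succ k ih =>
    have hk' : k < n := by omega
    rw [Function.iterate_succ_apply', Function.iterate_succ_apply', ih (by omega), m_succ]
    have hnk : n - k - 1 = n - (k + 1) := by omega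
    by_cases h : Odd (T^[k] b)
    · rw [T_odd _ _ _ (by omega) h, hnk]
      simp [h]
    · rw [T_even _ _ _ (by omega) (Nat.not_odd_iff_even.mp h), hnk]
      simp [h]

theorem stmt3 : ∀ n ≥ 1, ∀ b < 2 ^ n,
    (Even (T^[n] b) → m b (n + 1) = m b n ∧ m (b + 2 ^ n) (n + 1) = m b n + 1) ∧
    (Odd (T^[n] b) → m b (n + 1) = m b n + 1 ∧ m (b + 2 ^ n) (n + 1) = m b n) := by
  intro n hn b hb
  have hmn : m (b + 2 ^ n) n = m b n := by
    unfold m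
    congr 1
    apply Finset.filter_congr
    intro k hk
    simp only [Finset.mem_range] at hk
    rw [key n b k (by omega)]
    have : Even (3 ^ (m b k) * 2 ^ (n - k)) := by
      apply Even.mul_left
      exact (Nat.even_pow' (by omega)).mpr even_two
    simp [Nat.odd_add, Nat.not_odd_iff_even.mpr this, eq_iff_iff]
    tauto
  have hend : T^[n] (b + 2 ^ n) = T^[n] b + 3 ^ (m b n) := by
    rw [key n b n le_rfl]; simp
  have hodd3 : Odd (3 ^ (m b n)) := Odd.pow (by decide)
  constructor
  · intro he
    have h1 : ¬ Odd (T^[n] b) := Nat.not_odd_iff_even.mpr he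
    have h2 : Odd (T^[n] (b + 2 ^ n)) := by
      rw [hend]; exact he.add_odd hodd3
    constructor
    · rw [m_succ]; simp [h1]
    · rw [m_succ, hmn]; simp [h2]
  · intro ho
    have h2 : ¬ Odd (T^[n] (b + 2 ^ n)) := by
      rw [hend]
      simp [Nat.not_odd_iff_even.mpr (ho.add_odd hodd3)]
    constructor
    · rw [m_succ]; simp [ho]
    · rw [m_succ, hmn]; simp [h2]
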